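/- Assume Assumption (3b2). If F₁ and F₂ are two maps from S to the closed subsets of X that both represent T, then F₁(s) = F₂(s) for μ-almost every s ∈ S. -/

import Mathlib

open MeasureTheory TopologicalSpace

/-- A set is regular open if it equals the interior of its closure. -/
def IsRegularOpen {X : Type*} [TopologicalSpace X] (a : Set X) : Prop :=
  interior (closure a) = a

/-- Pointwise step: if `G` is closed, `E ⊆ closure b → G ⊆ closure b` for all
complements of closures of basis elements, then `G ⊆ E`. -/
lemma subset_of_forall_compl {X : Type*} [TopologicalSpace X]
    {A₀ : Set (Set X)} (hbasis : IsTopologicalBasis A₀)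
    (hreg : ∀ a ∈ A₀, IsRegularOpen a)
    {E G : Set X} (hE : IsClosed E)
    (h : ∀ a ∈ A₀, E ⊆ closure ((closure a)ᶜ) → G ⊆ closure ((closure a)ᶜ)) :
    G ⊆ E := by
  intro x hx
  by_contra hxE
  obtain ⟨a, haA, hxa, haE⟩ := hbasis.exists_subset_of_mem_open hxE hE.isOpen_compl
  have hcl : closure ((closure a)ᶜ) = aᶜ := by
    rw [closure_compl, hreg a haA]
  have hEsub : E ⊆ closure ((closure a)ᶜ) := by
    rw [hcl]
    intro y hy hya
    exact haE hya hy
  have := h a haA hEsub hx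
  rw [hcl] at this
  exact this hxa

/-- Uniqueness: under Assumption (3b2), two closed-set-valued maps representing `T`
coincide almost everywhere. -/
theorem stmt_10
    {X S : Type*} [TopologicalSpace X] [MeasurableSpace S]
    (μ : Measure S) [IsFiniteMeasure μ]
    -- `A` is a Boolean subalgebra of `Reg(X)`
    (A : Set (Set X))
    (hAreg : ∀ a ∈ A, IsRegularOpen a)
    (hAbot : (∅ : Set X) ∈ A) (hAtop : (Set.univ : Set X) ∈ A)
    (hAinf : ∀ a ∈ A, ∀ b ∈ A, a ∩ b ∈ A)
    (hAsup : ∀ a ∈ A, ∀ b ∈ A, interior (closure (a ∪ b)) ∈ A)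
    (hAcompl : ∀ a ∈ A, (closure a)ᶜ ∈ A)
    -- `T : A → Σ`, multiplicative mod null sets
    (T : Set X → Set S)
    (hTmeas : ∀ a ∈ A, MeasurableSet (T a))
    (hTinf : ∀ a ∈ A, ∀ b ∈ A, (T (a ∩ b) : Set S) =ᵐ[μ] (T a ∩ T b : Set S))
    -- Assumption (3b2): a countable subfamily of `A` is a base of the topology
    (h3b2 : ∃ A₀ ⊆ A, A₀.Countable ∧ IsTopologicalBasis A₀)
    (F₁ F₂ : S → Set X)
    (hF₁closed : ∀ s, IsClosed (F₁ s)) (hF₂closed : ∀ s, IsClosed (F₂ s))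
    (hF₁ : ∀ a ∈ A, ({s | F₁ s ⊆ closure a} : Set S) =ᵐ[μ] T a)
    (hF₂ : ∀ a ∈ A, ({s | F₂ s ⊆ closure a} : Set S) =ᵐ[μ] T a)
    : ∀ᵐ s ∂μ, F₁ s = F₂ s := by
  obtain ⟨A₀, hA₀A, hA₀c, hbasis⟩ := h3b2
  -- For every `a ∈ A`, the two representing conditions agree a.e.
  have key : ∀ a ∈ A, ∀ᵐ s ∂μ, (F₁ s ⊆ closure a ↔ F₂ s ⊆ closure a) := by
    intro a ha
    have := (hF₁ a ha).trans (hF₂ a ha).symm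
    filter_upwards [this] with s hs
    exact eq_iff_iff.mp hs
  -- countable family: complements of closures of basis elements
  have hcount : ((fun a : Set X => (closure a)ᶜ) '' A₀).Countable := hA₀c.image _
  have hae : ∀ᵐ s ∂μ, ∀ b ∈ (fun a : Set X => (closure a)ᶜ) '' A₀,
      (F₁ s ⊆ closure b ↔ F₂ s ⊆ closure b) := by
    rw [MeasureTheory.ae_ball_iff hcount]
    rintro b ⟨a, haA₀, rfl⟩
    exact key _ (hAcompl a (hA₀A haA₀))
  filter_upwards [hae] with s hs
  have hregA₀ : ∀ a ∈ A₀, IsRegularOpen a := fun a ha => hAreg a (hA₀A ha)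
  apply Set.Subset.antisymm
  · exact subset_of_forall_compl hbasis hregA₀ (hF₂closed s)
      (fun a ha h => ((hs _ ⟨a, ha, rfl⟩).2 h))
  · exact subset_of_forall_compl hbasis hregA₀ (hF₁closed s)
      (fun a ha h => ((hs _ ⟨a, ha, rfl⟩).1 h))
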